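/- For every integer n ≥ 2, the Bernoulli polynomials Bₙ(x) and B_{n+1}(x) have no common zero in the interval [0,1]. -/
import Mathlib


open Set

open Real in
private lemma aux_aeval_eq_bernoulliFun (m : ℕ) (x : ℝ) :
    Polynomial.aeval x (Polynomial.bernoulli m) = bernoulliFun m x := by
  rw [bernoulliFun, Polynomial.aeval_def, Polynomial.eval_map]

private lemma aux_continuous_bernoulliFun (m : ℕ) : Continuous (bernoulliFun m) :=
  Polynomial.continuous _

/-- Rolle step: between two zeros of `Bₘ` there is a zero of `B_{m-1}`. -/
private lemma aux_rolle {m : ℕ} (hm : m ≠ 0) {a b : ℝ} (hab : a < b)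
    (ha : bernoulliFun m a = 0) (hb : bernoulliFun m b = 0) :
    ∃ c ∈ Ioo a b, bernoulliFun (m - 1) c = 0 := by
  obtain ⟨c, hc, hc'⟩ := exists_hasDerivAt_eq_zero hab
    ((aux_continuous_bernoulliFun m).continuousOn) (ha.trans hb.symm)
    (fun y _ => hasDerivAt_bernoulliFun m y)
  refine ⟨c, hc, ?_⟩
  have hm' : (m : ℝ) ≠ 0 := Nat.cast_ne_zero.mpr hm
  exact (mul_eq_zero.mp hc').resolve_left hm'

/-- Double Rolle step: three zeros of `Bₘ` in `[a,b]` give a zero of `B_{m-2}` in `(a,b)`. -/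
private lemma aux_rolle2 {m : ℕ} (hm : 2 ≤ m) {a b x : ℝ} (hax : a < x) (hxb : x < b)
    (ha : bernoulliFun m a = 0) (hb : bernoulliFun m b = 0) (hx : bernoulliFun m x = 0) :
    ∃ c ∈ Ioo a b, bernoulliFun (m - 2) c = 0 := by
  obtain ⟨c₁, hc₁, hz₁⟩ := aux_rolle (by omega) hax ha hx
  obtain ⟨c₂, hc₂, hz₂⟩ := aux_rolle (by omega) hxb hx hb
  have hcc : c₁ < c₂ := hc₁.2.trans hc₂.1
  obtain ⟨c, hc, hz⟩ := aux_rolle (m := m - 1) (by omega) hcc hz₁ hz₂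
  refine ⟨c, ⟨hc₁.1.trans hc.1, hc.2.trans hc₂.2⟩, ?_⟩
  rwa [show m - 1 - 1 = m - 2 by omega] at hz

open Real in
private lemma aux_odd_zero {k : ℕ} (hk : k ≠ 0) : bernoulliFun (2 * k + 1) 0 = 0 := by
  rw [bernoulliFun_eval_zero, bernoulli_eq_bernoulli'_of_ne_one (by omega),
    bernoulli'_eq_zero_of_odd ⟨k, by ring⟩ (by omega)]
  norm_num

open Real in
private lemma aux_odd_one {k : ℕ} (hk : k ≠ 0) : bernoulliFun (2 * k + 1) 1 = 0 := by
  rw [bernoulliFun_endpoints_eq_of_ne_one (by omega)]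
  exact aux_odd_zero hk

open Real in
private lemma aux_odd_half {k : ℕ} (hk : k ≠ 0) : bernoulliFun (2 * k + 1) (1 / 2) = 0 := by
  have h := hasSum_one_div_nat_pow_mul_sin hk (x := 1 / 2) (by constructor <;> norm_num)
  have hzero : (fun n : ℕ => 1 / (n : ℝ) ^ (2 * k + 1) * Real.sin (2 * π * n * (1 / 2)))
      = fun _ => (0 : ℝ) := by
    funext n
    rw [show 2 * π * (n : ℝ) * (1 / 2) = (n : ℝ) * π by ring, Real.sin_nat_mul_pi, mul_zero]
  rw [hzero] at h
  have h0 := h.unique hasSum_zero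
  have hC : ((-1 : ℝ) ^ (k + 1) * (2 * π) ^ (2 * k + 1) / 2 / ((2 * k + 1).factorial : ℝ)) ≠ 0 := by
    have h1 : ((-1 : ℝ)) ^ (k + 1) ≠ 0 := pow_ne_zero _ (by norm_num)
    have h2 : ((2 * π : ℝ)) ^ (2 * k + 1) ≠ 0 := by positivity
    have h3 : (((2 * k + 1).factorial : ℝ)) ≠ 0 := Nat.cast_ne_zero.mpr (Nat.factorial_ne_zero _)
    exact div_ne_zero (div_ne_zero (mul_ne_zero h1 h2) two_ne_zero) h3
  have := (mul_eq_zero.mp h0).resolve_left hC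
  exact this

open Real in
private lemma aux_even_zero_ne {k : ℕ} (hk : k ≠ 0) : bernoulliFun (2 * k) 0 ≠ 0 := by
  rw [bernoulliFun_eval_zero]
  intro h
  have hs := hasSum_zeta_nat hk
  rw [h] at hs
  simp only [mul_zero, zero_div] at hs
  have h1 := le_hasSum hs 1 (fun j _ => by positivity)
  norm_num at h1

open Real in
private lemma aux_even_one_ne {k : ℕ} (hk : k ≠ 0) : bernoulliFun (2 * k) 1 ≠ 0 := by
  rw [bernoulliFun_endpoints_eq_of_ne_one (by omega)]
  exact aux_even_zero_ne hk

open Real in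
private lemma aux_even_half_ne {k : ℕ} (hk : k ≠ 0) : bernoulliFun (2 * k) (1 / 2) ≠ 0 := by
  intro hzero
  have h := hasSum_one_div_nat_pow_mul_cos hk (x := 1 / 2) (by constructor <;> norm_num)
  rw [show (Polynomial.map (algebraMap ℚ ℝ) (Polynomial.bernoulli (2 * k))).eval (1 / 2 : ℝ)
      = bernoulliFun (2 * k) (1 / 2) from rfl, hzero, mul_zero] at h
  -- now h : HasSum f 0 where f n = 1/n^(2k) * cos(π n); show the sum is negative.
  set f := fun n : ℕ => 1 / (n : ℝ) ^ (2 * k) * Real.cos (2 * π * n * (1 / 2)) with hf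
  have hg : HasSum (fun n : ℕ => 1 / (n : ℝ) ^ 2 - ite (n = 1) (2 : ℝ) 0) (π ^ 2 / 6 - 2) :=
    hasSum_zeta_two.sub (hasSum_ite_eq 1 2)
  have hle : ∀ n : ℕ, f n ≤ 1 / (n : ℝ) ^ 2 - ite (n = 1) (2 : ℝ) 0 := by
    intro n
    match n with
    | 0 => simp [hf, zero_pow (by omega : 2 * k ≠ 0)]
    | 1 =>
      show 1 / ((1 : ℕ) : ℝ) ^ (2 * k) * Real.cos (2 * π * ((1 : ℕ) : ℝ) * (1 / 2)) ≤ _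
      rw [show 2 * π * ((1 : ℕ) : ℝ) * (1 / 2) = π by push_cast; ring, Real.cos_pi]
      norm_num
    | (n + 2) =>
      have hn1 : (1 : ℝ) ≤ ((n + 2 : ℕ) : ℝ) := by
        push_cast; linarith [Nat.cast_nonneg (α := ℝ) n]
      have h1 : f (n + 2) ≤ 1 / ((n + 2 : ℕ) : ℝ) ^ (2 * k) := by
        rw [hf]
        have := mul_le_of_le_one_right
          (by positivity : (0 : ℝ) ≤ 1 / ((n + 2 : ℕ) : ℝ) ^ (2 * k))
          (Real.cos_le_one (2 * π * ((n + 2 : ℕ) : ℝ) * (1 / 2)))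
        exact this
      have h2 : (1 : ℝ) / ((n + 2 : ℕ) : ℝ) ^ (2 * k) ≤ 1 / ((n + 2 : ℕ) : ℝ) ^ 2 := by
        apply one_div_le_one_div_of_le (by positivity)
        exact pow_le_pow_right₀ hn1 (by omega)
      simp only [if_neg (by omega : n + 2 ≠ 1), sub_zero]
      exact h1.trans h2
  have hS := hasSum_le hle h hg
  have hpi := Real.pi_lt_d2
  have hpi0 := Real.pi_pos
  nlinarith
  
/-- Odd Bernoulli polynomials vanish on `[0,1]` only at `0`, `1/2`, `1`. -/
private lemma aux_odd_zeros : ∀ k : ℕ, k ≠ 0 → ∀ x ∈ Icc (0:ℝ) 1,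
    bernoulliFun (2 * k + 1) x = 0 → x = 0 ∨ x = 1 / 2 ∨ x = 1 := by
  intro k
  induction k with
  | zero => intro h; exact absurd rfl h
  | succ k ih =>
    intro _ x hx hzx
    rcases Nat.eq_zero_or_pos k with hk0 | hkpos
    · -- base case: B₃
      subst hk0
      have hb2 : (_root_.bernoulli 2 : ℚ) = 1 / 6 := by
        rw [bernoulli_eq_bernoulli'_of_ne_one (by norm_num), bernoulli'_two]
      have hb3 : (_root_.bernoulli 3 : ℚ) = 0 := by
        rw [bernoulli_eq_bernoulli'_of_ne_one (by norm_num), bernoulli'_three]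
      have hev : bernoulliFun 3 x = x ^ 3 - 3 / 2 * x ^ 2 + 1 / 2 * x := by
        rw [bernoulliFun, Polynomial.bernoulli_def]
        simp only [Finset.sum_range_succ, Finset.sum_range_zero, bernoulli_zero, bernoulli_one,
          hb2, hb3]
        simp [Polynomial.eval_monomial]
        norm_num
        ring
      rw [show 2 * (0 + 1) + 1 = 3 by norm_num] at hzx
      rw [hev] at hzx
      have hfac : x * (x - 1 / 2) * (x - 1) = 0 := by linear_combination hzx
      rcases mul_eq_zero.mp hfac with h | h
      · rcases mul_eq_zero.mp h with h | h
        · exact Or.inl h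
        · exact Or.inr (Or.inl (by linarith [sub_eq_zero.mp h]))
      · exact Or.inr (Or.inr (sub_eq_zero.mp h))
    · -- inductive step
      have hk : k ≠ 0 := by omega
      by_contra hcon
      push_neg at hcon
      obtain ⟨hx0, hxh, hx1⟩ := hcon
      have hm : 2 * (k + 1) + 1 = 2 * k + 3 := by ring
      rw [hm] at hzx
      have hz0 : bernoulliFun (2 * k + 3) 0 = 0 := by
        have := aux_odd_zero (k := k + 1) (by omega)
        rwa [hm] at this
      have hzh : bernoulliFun (2 * k + 3) (1 / 2) = 0 := by
        have := aux_odd_half (k := k + 1) (by omega)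
        rwa [hm] at this
      have hz1 : bernoulliFun (2 * k + 3) 1 = 0 := by
        have := aux_odd_one (k := k + 1) (by omega)
        rwa [hm] at this
      obtain ⟨hx_lo, hx_hi⟩ := hx
      rcases lt_trichotomy x (1 / 2) with hlt | heq | hgt
      · -- x ∈ (0, 1/2)
        have hax : (0 : ℝ) < x := lt_of_le_of_ne hx_lo (Ne.symm hx0)
        obtain ⟨c, hc, hzc⟩ := aux_rolle2 (m := 2 * k + 3) (by omega) hax hlt hz0 hzh hzx
        rw [show 2 * k + 3 - 2 = 2 * k + 1 by omega] at hzc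
        have hcI : c ∈ Icc (0:ℝ) 1 := ⟨le_of_lt hc.1, by linarith [hc.2]⟩
        rcases ih hk c hcI hzc with h | h | h <;>
          [exact absurd h (ne_of_gt hc.1); exact absurd h (ne_of_lt hc.2);
           exact absurd h (by linarith [hc.2] : c ≠ 1)]
      · exact hxh heq
      · -- x ∈ (1/2, 1)
        have hxb : x < 1 := lt_of_le_of_ne hx_hi hx1
        obtain ⟨c, hc, hzc⟩ := aux_rolle2 (m := 2 * k + 3) (by omega) hgt hxb hzh hz1 hzx
        rw [show 2 * k + 3 - 2 = 2 * k + 1 by omega] at hzc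
        have hcI : c ∈ Icc (0:ℝ) 1 := ⟨by linarith [hc.1], le_of_lt hc.2⟩
        rcases ih hk c hcI hzc with h | h | h <;>
          [exact absurd h (by linarith [hc.1] : c ≠ 0);
           exact absurd h (ne_of_gt hc.1); exact absurd h (ne_of_lt hc.2)]

private lemma aux_even_ne {k : ℕ} (hk : k ≠ 0) {x : ℝ}
    (hx : x = 0 ∨ x = 1 / 2 ∨ x = 1) : bernoulliFun (2 * k) x ≠ 0 := by
  rcases hx with h | h | h
  · rw [h]; exact aux_even_zero_ne hk
  · rw [h]; exact aux_even_half_ne hk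
  · rw [h]; exact aux_even_one_ne hk

/-- For `n ≥ 2`, the Bernoulli polynomials `Bₙ` and `B_{n+1}` have no common zero
in `[0,1]`. -/
theorem stmt_6 (n : ℕ) (hn : 2 ≤ n) :
    ∀ x ∈ Icc (0:ℝ) 1,
      ¬(Polynomial.aeval x (Polynomial.bernoulli n) = 0 ∧
        Polynomial.aeval x (Polynomial.bernoulli (n+1)) = 0) := by
  intro x hx h
  obtain ⟨h1, h2⟩ := h
  rw [aux_aeval_eq_bernoulliFun] at h1 h2
  rcases Nat.even_or_odd n with ⟨k, hkn⟩ | ⟨k, hkn⟩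
  · -- n = 2k even
    have hk : k ≠ 0 := by omega
    have hn2 : n = 2 * k := by omega
    have hn3 : n + 1 = 2 * k + 1 := by omega
    rw [hn3] at h2
    have hmem := aux_odd_zeros k hk x hx h2
    rw [hn2] at h1
    exact aux_even_ne hk hmem h1
  · -- n = 2k + 1 odd
    have hk : k ≠ 0 := by omega
    have hn2 : n = 2 * k + 1 := by omega
    rw [hn2] at h1
    have hmem := aux_odd_zeros k hk x hx h1
    have hn3 : n + 1 = 2 * (k + 1) := by omega
    rw [hn3] at h2
    exact aux_even_ne (k := k + 1) (by omega) hmem h2
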